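/- For a two-qubit state in canonical form with maximally mixed marginal on Alice's side (a = 0) and measurements û_0 = x̂, û_1 = ŷ for Alice, T_0 = x̂, T_1 = ŷ for Bob, the witness Q equals |c_1 c_2|; hence Q > 0 if and only if both c_1 ≠ 0 and c_2 ≠ 0. -/

import Mathlib

open Matrix Kronecker

/-- The Pauli matrices σ₁ = σ_x, σ₂ = σ_y, σ₃ = σ_z. -/
noncomputable def pauli : Fin 3 → Matrix (Fin 2) (Fin 2) ℂ
  | 0 => !![0, 1; 1, 0]
  | 1 => !![0, -Complex.I; Complex.I, 0]
  | 2 => !![1, 0; 0, -1]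

/-- v·σ for a real vector v. -/
noncomputable def blochOp (v : Fin 3 → ℝ) : Matrix (Fin 2) (Fin 2) ℂ :=
  ∑ i, (v i : ℂ) • pauli i

/-- The canonical two-qubit state
    ζ = (1/4)(I⊗I + a·σ⊗I + I⊗b·σ + Σᵢ cᵢ σᵢ⊗σᵢ). -/
noncomputable def zeta (a b c : Fin 3 → ℝ) : Matrix (Fin 2 × Fin 2) (Fin 2 × Fin 2) ℂ :=
  (1/4 : ℂ) • ((1 : Matrix (Fin 2) (Fin 2) ℂ) ⊗ₖ (1 : Matrix (Fin 2) (Fin 2) ℂ)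
    + blochOp a ⊗ₖ (1 : Matrix (Fin 2) (Fin 2) ℂ)
    + (1 : Matrix (Fin 2) (Fin 2) ℂ) ⊗ₖ blochOp b
    + ∑ i, (c i : ℂ) • (pauli i ⊗ₖ pauli i))

/-- Alice's projective measurement operators M_{x1|x0} = (I + (−1)^{x1} û_{x0}·σ)/2. -/
noncomputable def measOp (u : Fin 2 → Fin 3 → ℝ) (x0 x1 : Fin 2) :
    Matrix (Fin 2) (Fin 2) ℂ :=
  (1/2 : ℂ) • ((1 : Matrix (Fin 2) (Fin 2) ℂ) + ((-1 : ℂ) ^ (x1 : ℕ)) • blochOp (u x0))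

/-- Conditional probability p(b|x1;x0,y) = Tr((M_{x1|x0}⊗M_{b|y})ζ)/Tr((M_{x1|x0}⊗I)ζ). -/
noncomputable def pcond (ρ : Matrix (Fin 2 × Fin 2) (Fin 2 × Fin 2) ℂ)
    (u T : Fin 2 → Fin 3 → ℝ) (b x1 x0 y : Fin 2) : ℝ :=
  (Matrix.trace ((measOp u x0 x1 ⊗ₖ measOp T y b) * ρ)).re /
    (Matrix.trace ((measOp u x0 x1 ⊗ₖ (1 : Matrix (Fin 2) (Fin 2) ℂ)) * ρ)).re

/-- The witness Q = |det M| with M_{y,x0} = p(0|0;x0,y) − p(0|1;x0,y). -/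
noncomputable def Qwitness (pc : Fin 2 → Fin 2 → Fin 2 → Fin 2 → ℝ) : ℝ :=
  |(pc 0 0 0 0 - pc 0 1 0 0) * (pc 0 0 1 1 - pc 0 1 1 1) -
    (pc 0 0 1 0 - pc 0 1 1 0) * (pc 0 0 0 1 - pc 0 1 0 1)|

/-- Measurement directions û_0 = x̂, û_1 = ŷ. -/
def dirXY : Fin 2 → Fin 3 → ℝ
  | 0 => ![1, 0, 0]
  | 1 => ![0, 1, 0]


set_option maxHeartbeats 2000000 in
theorem maximally_mixed_marginal_witness (b c : Fin 3 → ℝ) :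
    Qwitness (pcond (zeta (fun _ => 0) b c) dirXY dirXY) = |c 0 * c 1| ∧
    (0 < Qwitness (pcond (zeta (fun _ => 0) b c) dirXY dirXY) ↔ c 0 ≠ 0 ∧ c 1 ≠ 0) := by
  set pc := pcond (zeta (fun _ => 0) b c) dirXY dirXY with hpc
  have tac : ∀ (x1 x0 y : Fin 2) (v : ℝ),
      (Matrix.trace ((measOp dirXY x0 x1 ⊗ₖ measOp dirXY y 0) * zeta (fun _ => 0) b c)).re /
      (Matrix.trace ((measOp dirXY x0 x1 ⊗ₖ (1 : Matrix (Fin 2) (Fin 2) ℂ)) * zeta (fun _ => 0) b c)).re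
      = v → pc 0 x1 x0 y = v := by
    intro x1 x0 y v h; rw [hpc]; exact h
  have h000 : pc 0 0 0 0 = (1 + b 0 + c 0)/2 := by
    apply tac
    simp only [zeta, measOp, blochOp, pauli, dirXY, Matrix.trace, Matrix.diag,
      Fintype.sum_prod_type, Fin.sum_univ_two, Fin.sum_univ_three, Matrix.mul_apply,
      Matrix.kroneckerMap_apply, Matrix.smul_apply, Matrix.add_apply, Matrix.one_apply,
      Matrix.cons_val', Matrix.cons_val_zero, Matrix.cons_val_one, Matrix.head_cons,
      Matrix.empty_val', Matrix.cons_val_fin_one, Matrix.head_fin_const, Matrix.cons_val_two]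
    norm_num; ring
  have h100 : pc 0 1 0 0 = (1 + b 0 - c 0)/2 := by
    apply tac
    simp only [zeta, measOp, blochOp, pauli, dirXY, Matrix.trace, Matrix.diag,
      Fintype.sum_prod_type, Fin.sum_univ_two, Fin.sum_univ_three, Matrix.mul_apply,
      Matrix.kroneckerMap_apply, Matrix.smul_apply, Matrix.add_apply, Matrix.one_apply,
      Matrix.cons_val', Matrix.cons_val_zero, Matrix.cons_val_one, Matrix.head_cons,
      Matrix.empty_val', Matrix.cons_val_fin_one, Matrix.head_fin_const, Matrix.cons_val_two]
    norm_num; ring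
  have h011 : pc 0 0 1 1 = (1 + b 1 + c 1)/2 := by
    apply tac
    simp only [zeta, measOp, blochOp, pauli, dirXY, Matrix.trace, Matrix.diag,
      Fintype.sum_prod_type, Fin.sum_univ_two, Fin.sum_univ_three, Matrix.mul_apply,
      Matrix.kroneckerMap_apply, Matrix.smul_apply, Matrix.add_apply, Matrix.one_apply,
      Matrix.cons_val', Matrix.cons_val_zero, Matrix.cons_val_one, Matrix.head_cons,
      Matrix.empty_val', Matrix.cons_val_fin_one, Matrix.head_fin_const, Matrix.cons_val_two]
    norm_num; ring
  have h111 : pc 0 1 1 1 = (1 + b 1 - c 1)/2 := by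
    apply tac
    simp only [zeta, measOp, blochOp, pauli, dirXY, Matrix.trace, Matrix.diag,
      Fintype.sum_prod_type, Fin.sum_univ_two, Fin.sum_univ_three, Matrix.mul_apply,
      Matrix.kroneckerMap_apply, Matrix.smul_apply, Matrix.add_apply, Matrix.one_apply,
      Matrix.cons_val', Matrix.cons_val_zero, Matrix.cons_val_one, Matrix.head_cons,
      Matrix.empty_val', Matrix.cons_val_fin_one, Matrix.head_fin_const, Matrix.cons_val_two]
    norm_num; ring
  have h010 : pc 0 0 1 0 = (1 + b 0)/2 := by
    apply tac
    simp only [zeta, measOp, blochOp, pauli, dirXY, Matrix.trace, Matrix.diag,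
      Fintype.sum_prod_type, Fin.sum_univ_two, Fin.sum_univ_three, Matrix.mul_apply,
      Matrix.kroneckerMap_apply, Matrix.smul_apply, Matrix.add_apply, Matrix.one_apply,
      Matrix.cons_val', Matrix.cons_val_zero, Matrix.cons_val_one, Matrix.head_cons,
      Matrix.empty_val', Matrix.cons_val_fin_one, Matrix.head_fin_const, Matrix.cons_val_two]
    norm_num; ring
  have h110 : pc 0 1 1 0 = (1 + b 0)/2 := by
    apply tac
    simp only [zeta, measOp, blochOp, pauli, dirXY, Matrix.trace, Matrix.diag,
      Fintype.sum_prod_type, Fin.sum_univ_two, Fin.sum_univ_three, Matrix.mul_apply,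
      Matrix.kroneckerMap_apply, Matrix.smul_apply, Matrix.add_apply, Matrix.one_apply,
      Matrix.cons_val', Matrix.cons_val_zero, Matrix.cons_val_one, Matrix.head_cons,
      Matrix.empty_val', Matrix.cons_val_fin_one, Matrix.head_fin_const, Matrix.cons_val_two]
    norm_num; ring
  have h001 : pc 0 0 0 1 = (1 + b 1)/2 := by
    apply tac
    simp only [zeta, measOp, blochOp, pauli, dirXY, Matrix.trace, Matrix.diag,
      Fintype.sum_prod_type, Fin.sum_univ_two, Fin.sum_univ_three, Matrix.mul_apply,
      Matrix.kroneckerMap_apply, Matrix.smul_apply, Matrix.add_apply, Matrix.one_apply,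
      Matrix.cons_val', Matrix.cons_val_zero, Matrix.cons_val_one, Matrix.head_cons,
      Matrix.empty_val', Matrix.cons_val_fin_one, Matrix.head_fin_const, Matrix.cons_val_two]
    norm_num; ring
  have h101 : pc 0 1 0 1 = (1 + b 1)/2 := by
    apply tac
    simp only [zeta, measOp, blochOp, pauli, dirXY, Matrix.trace, Matrix.diag,
      Fintype.sum_prod_type, Fin.sum_univ_two, Fin.sum_univ_three, Matrix.mul_apply,
      Matrix.kroneckerMap_apply, Matrix.smul_apply, Matrix.add_apply, Matrix.one_apply,
      Matrix.cons_val', Matrix.cons_val_zero, Matrix.cons_val_one, Matrix.head_cons,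
      Matrix.empty_val', Matrix.cons_val_fin_one, Matrix.head_fin_const, Matrix.cons_val_two]
    norm_num; ring
  have hQ : Qwitness pc = |c 0 * c 1| := by
    rw [Qwitness, h000, h100, h011, h111, h010, h110, h001, h101]
    congr 1; ring
  refine ⟨hQ, ?_⟩
  rw [hQ]
  constructor
  · intro h
    have : c 0 * c 1 ≠ 0 := by
      intro h0; rw [h0] at h; simp at h
    exact ⟨fun h0 => this (by rw [h0]; ring), fun h1 => this (by rw [h1]; ring)⟩
  · rintro ⟨h0, h1⟩
    exact abs_pos.mpr (mul_ne_zero h0 h1)
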